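/- Let W be a DMC with finite input alphabet X containing the symbol 0 and finite output alphabet Y, with Q0 = W(·|0). Suppose Q0 does not lie in the convex hull of {W(·|x) : x ∈ X, x ≠ 0}. If {P_n} is a sequence of input distributions on X whose induced output distributions Q_n = P_n W converge pointwise to Q0, then lim_{n→∞} P_n(0) = 1, and consequently lim_{n→∞} P_n(x) = 0 for every x ≠ 0. -/

import Mathlib

/-!
STATEMENT 11: If `Q0 = W(·|x0)` does not lie in the convex hull of
`{W(·|x) : x ≠ x0}` (and no two input symbols induce the same output distribution),
and `{P_n}` is a sequence of input distributions whose induced output distributions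
converge pointwise to `Q0`, then `P_n(x0) → 1` and `P_n(x) → 0` for every `x ≠ x0`.
-/

open Filter
open scoped BigOperators Topology

/-- `p` is a probability mass function on a finite type. -/
def IsDist {α : Type*} [Fintype α] (p : α → ℝ) : Prop :=
  (∀ a, 0 ≤ p a) ∧ ∑ a, p a = 1

/-- Output distribution on `Y` induced by input distribution `P` through channel `W`. -/
noncomputable def outDist {X Y : Type*} [Fintype X] (P : X → ℝ) (W : X → Y → ℝ) : Y → ℝ :=
  fun y => ∑ x, P x * W x y

lemma key_lemma {X Y : Type*} [Fintype X] [Fintype Y]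
    (W : X → Y → ℝ) (x0 : X)
    (hnotred : W x0 ∉ convexHull ℝ (W '' {x : X | x ≠ x0}))
    (p : X → ℝ) (hp : IsDist p) (hout : ∀ y, outDist p W y = W x0 y) :
    p x0 = 1 := by
  classical
  by_contra h
  have hle : p x0 ≤ 1 := by
    calc p x0 ≤ ∑ x, p x := Finset.single_le_sum (fun i _ => hp.1 i) (Finset.mem_univ x0)
    _ = 1 := hp.2
  have ht : p x0 < 1 := lt_of_le_of_ne hle h
  set s : Finset X := Finset.univ.erase x0 with hs
  have hsum : ∑ x ∈ s, p x = 1 - p x0 := by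
    have h2 := hp.2
    rw [← Finset.add_sum_erase _ _ (Finset.mem_univ x0)] at h2
    linarith
  have hvec : ∑ x ∈ s, p x • W x = (1 - p x0) • W x0 := by
    funext y
    have h1 : (∑ x ∈ s, p x • W x) y = ∑ x ∈ s, p x * W x y := by
      rw [Finset.sum_apply]; rfl
    have h2 : ∑ x ∈ s, p x * W x y = (∑ x, p x * W x y) - p x0 * W x0 y := by
      rw [← Finset.add_sum_erase _ _ (Finset.mem_univ x0)]; ring
    have h3 : (∑ x, p x * W x y) = W x0 y := hout y
    simp only [h1, h2, h3, Pi.smul_apply, smul_eq_mul]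
    ring
  have hpos : 0 < ∑ x ∈ s, p x := by rw [hsum]; linarith
  have hmem : s.centerMass p W ∈ convexHull ℝ (W '' {x : X | x ≠ x0}) := by
    refine Finset.centerMass_mem_convexHull s (fun i _ => hp.1 i) hpos (fun i hi => ?_)
    exact ⟨i, (Finset.mem_erase.mp hi).1, rfl⟩
  have hcm : s.centerMass p W = W x0 := by
    rw [Finset.centerMass, hvec, hsum, smul_smul, inv_mul_cancel₀ (by linarith), one_smul]
  rw [hcm] at hmem
  exact hnotred hmem

theorem statement11 {X Y : Type*} [Fintype X] [Fintype Y]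
    (W : X → Y → ℝ) (x0 : X) (hW : ∀ x, IsDist (W x))
    (hinj : Function.Injective W)
    (hnotred : W x0 ∉ convexHull ℝ (W '' {x : X | x ≠ x0}))
    (P : ℕ → X → ℝ) (hP : ∀ n, IsDist (P n))
    (hconv : ∀ y, Tendsto (fun n => outDist (P n) W y) atTop (nhds (W x0 y))) :
    Tendsto (fun n => P n x0) atTop (nhds 1) ∧
      ∀ x, x ≠ x0 → Tendsto (fun n => P n x) atTop (nhds 0) := by
  classical
  have hmain : Tendsto (fun n => P n x0) atTop (nhds 1) := by
    apply tendsto_of_subseq_tendsto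
    intro ns hns
    have hmem : ∀ n, P (ns n) ∈ stdSimplex ℝ X := fun n => ⟨(hP (ns n)).1, (hP (ns n)).2⟩
    obtain ⟨p, hpS, φ, hφ, hlim⟩ := (isCompact_stdSimplex ℝ X).tendsto_subseq hmem
    have hcoord : ∀ x, Tendsto (fun n => P (ns (φ n)) x) atTop (nhds (p x)) :=
      fun x => ((continuous_apply x).tendsto p).comp hlim
    have hout : ∀ y, outDist p W y = W x0 y := by
      intro y
      have h1 : Tendsto (fun n => outDist (P (ns (φ n))) W y) atTop (nhds (outDist p W y)) := by
        unfold outDist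
        exact tendsto_finset_sum _ (fun x _ => (hcoord x).mul_const (W x y))
      have h2 : Tendsto (fun n => outDist (P (ns (φ n))) W y) atTop (nhds (W x0 y)) :=
        (hconv y).comp (hns.comp hφ.tendsto_atTop)
      exact tendsto_nhds_unique h1 h2
    have hp1 : p x0 = 1 := key_lemma W x0 hnotred p ⟨hpS.1, hpS.2⟩ hout
    exact ⟨φ, by simpa [hp1] using hcoord x0⟩
  refine ⟨hmain, fun x hx => ?_⟩
  have hbound : ∀ n, P n x ≤ 1 - P n x0 := by
    intro n
    have h1 : P n x + P n x0 ≤ ∑ a, P n a := by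
      rw [← Finset.sum_pair hx]
      exact Finset.sum_le_sum_of_subset_of_nonneg (Finset.subset_univ _)
        (fun i _ _ => (hP n).1 i)
    rw [(hP n).2] at h1
    linarith
  have htend : Tendsto (fun n => 1 - P n x0) atTop (nhds 0) := by
    have := tendsto_const_nhds.sub hmain (f := fun _ : ℕ => (1:ℝ))
    simpa using this
  exact squeeze_zero (fun n => (hP n).1 x) hbound htend
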